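/- arXiv:1112.6236 — 9 statements merged into one kernel-verified Lean document; each statement's English description precedes it below -/
import Mathlib

section
/- Let H be a complex Hilbert space and let B(H) denote the algebra of all bounded linear operators on H. Every 2-local inner derivation Δ : B(H) → B(H) is a derivation, i.e., Δ is additive, ℂ-homogeneous, and satisfies Δ(x·y) = Δ(x)·y + x·Δ(y) for all x, y ∈ B(H). -/
open scoped ComplexInnerProductSpace

section Aux

variable {H : Type*} [NormedAddCommGroup H] [InnerProductSpace ℂ H]

noncomputable def TLrk (ξ η : H) : H →L[ℂ] H := (innerSL ℂ η).smulRight ξ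

lemma TLrk_apply (ξ η v : H) : TLrk ξ η v = ⟪η, v⟫ • ξ := rfl

lemma TLhalf {M : Type*} [AddCommGroup M] [Module ℂ M] {a b : M} (h : a + a = b + b) :
    a = b := by
  have h2 : (2 : ℂ) • a = (2 : ℂ) • b := by rw [two_smul, two_smul]; exact h
  exact smul_right_injective M two_ne_zero h2

lemma TLcancel1 {A : Type*} [Ring A] {a b l r : A} (h : l = r) (key : a - b = l - r) :
    a = b := by
  rw [h, sub_self] at key
  exact sub_eq_zero.mp key

lemma TLcommdiff {A : Type*} [Ring A] {a b t s : A} (ha : s = a * t - t * a)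
    (hb : s = b * t - t * b) : (a - b) * t = t * (a - b) := by
  have h : (a - b) * t - t * (a - b) = (a * t - t * a) - (b * t - t * b) := by noncomm_ring
  rw [← ha, ← hb, sub_self] at h
  exact sub_eq_zero.mp h

lemma TLcomm_rk {ξ η : H} (hξ : ξ ≠ 0) (hη : η ≠ 0) {d : H →L[ℂ] H}
    (hd : d * TLrk ξ η = TLrk ξ η * d) (z : H →L[ℂ] H) :
    ⟪η, (d * z - z * d) ξ⟫ = 0 := by
  have h1 : ∀ v, ⟪η, v⟫ • d ξ = ⟪η, d v⟫ • ξ := by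
    intro v
    have := congrFun (congrArg DFunLike.coe hd) v
    simpa [ContinuousLinearMap.mul_apply, TLrk_apply, map_smul] using this
  have hηη : ⟪η, η⟫ ≠ 0 := by
    simpa [inner_self_eq_zero] using hη
  set l : ℂ := (⟪η, η⟫)⁻¹ * ⟪η, d η⟫ with hl
  have hdξ : d ξ = l • ξ := by
    have h := h1 η
    have := congrArg (fun w => (⟪η, η⟫)⁻¹ • w) h
    simpa [smul_smul, inv_mul_cancel₀ hηη, hl, mul_comm, mul_inv_cancel₀, inv_mul_cancel₀, hη] using this
  have hscal : ∀ v, ⟪η, d v⟫ = l * ⟪η, v⟫ := by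
    intro v
    have h := h1 v
    rw [hdξ, smul_smul] at h
    have := smul_left_injective ℂ hξ h
    rw [← this]; ring
  have : ⟪η, (d * z - z * d) ξ⟫
      = ⟪η, d (z ξ)⟫ - ⟪η, z (d ξ)⟫ := by
    simp [ContinuousLinearMap.sub_apply, ContinuousLinearMap.mul_apply, inner_sub_right]
  rw [this, hscal, hdξ, map_smul, inner_smul_right]
  ring

/-- two operators from pairings with the same rank-one give the same scalar data -/
lemma TLagree {ξ η : H} (hξ : ξ ≠ 0) (hη : η ≠ 0) {a b s : H →L[ℂ] H}
    (ha : s = a * TLrk ξ η - TLrk ξ η * a) (hb : s = b * TLrk ξ η - TLrk ξ η * b)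
    (z : H →L[ℂ] H) :
    ⟪η, (a * z - z * a) ξ⟫ = ⟪η, (b * z - z * b) ξ⟫ := by
  have hc := TLcomm_rk hξ hη (TLcommdiff ha hb) z
  have hsplit : (a * z - z * a) = (b * z - z * b) + ((a - b) * z - z * (a - b)) := by
    noncomm_ring
  rw [hsplit]
  simp only [ContinuousLinearMap.add_apply, inner_add_right, hc, add_zero]

end Aux

/-- Every 2-local inner derivation on `B(H)`, the algebra of bounded linear
operators on a complex Hilbert space `H`, is a derivation. -/
theorem twoLocal_inner_derivation_is_derivation_BH
    (H : Type*) [NormedAddCommGroup H] [InnerProductSpace ℂ H] [CompleteSpace H]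
    (Δ : (H →L[ℂ] H) → (H →L[ℂ] H))
    (h2loc : ∀ x y : H →L[ℂ] H, ∃ a : H →L[ℂ] H,
      Δ x = a * x - x * a ∧ Δ y = a * y - y * a) :
    (∀ x y : H →L[ℂ] H, Δ (x + y) = Δ x + Δ y) ∧
    (∀ (c : ℂ) (x : H →L[ℂ] H), Δ (c • x) = c • Δ x) ∧
    (∀ x y : H →L[ℂ] H, Δ (x * y) = Δ x * y + x * Δ y) := by
  have hom : ∀ (c : ℂ) (x : H →L[ℂ] H), Δ (c • x) = c • Δ x := by
    intro c x
    obtain ⟨a, h1, h2⟩ := h2loc (c • x) x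
    rw [h1, h2]
    rw [mul_smul_comm, smul_mul_assoc, smul_sub]
  have add : ∀ x y : H →L[ℂ] H, Δ (x + y) = Δ x + Δ y := by
    intro x y
    ext ξ
    refine ext_inner_left ℂ fun η => ?_
    by_cases hξ : ξ = 0
    · simp [hξ]
    by_cases hη : η = 0
    · simp [hη]
    obtain ⟨a, ha1, ha2⟩ := h2loc (x + y) (TLrk ξ η)
    obtain ⟨b, hb1, hb2⟩ := h2loc x (TLrk ξ η)
    obtain ⟨c, hc1, hc2⟩ := h2loc y (TLrk ξ η)
    have hx := TLagree hξ hη ha2 hb2 x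
    have hy := TLagree hξ hη ha2 hc2 y
    have hsplit : a * (x + y) - (x + y) * a = (a * x - x * a) + (a * y - y * a) := by
      noncomm_ring
    rw [ha1, hsplit]
    rw [ContinuousLinearMap.add_apply, inner_add_right, hx, hy]
    rw [← hb1, ← hc1]
    simp [inner_add_right]
  refine ⟨add, hom, ?_⟩
  have hsq : ∀ u : H →L[ℂ] H, Δ (u * u) = Δ u * u + u * Δ u := by
    intro u
    obtain ⟨a, h1, h2⟩ := h2loc u (u * u)
    rw [h1, h2]; noncomm_ring
  have hone : Δ 1 = 0 := by
    obtain ⟨a, h1, _⟩ := h2loc 1 1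
    simp [h1]
  have hJ : ∀ u v : H →L[ℂ] H,
      Δ (u * v) + Δ (v * u) = Δ u * v + u * Δ v + Δ v * u + v * Δ u := by
    intro u v
    have h := hsq (u + v)
    rw [show (u+v)*(u+v) = u*u + (u*v + (v*u + v*v)) from by noncomm_ring] at h
    simp only [add] at h
    exact TLcancel1 (congrArg₂ (· - ·) (congrArg₂ (· - ·) h (hsq u)) (hsq v))
      (by noncomm_ring)
  have hxyx : ∀ u v : H →L[ℂ] H,
      Δ (u * v * u) = Δ u * v * u + u * Δ v * u + u * v * Δ u := by
    intro u v
    have hA : Δ (u*(u*v+v*u)) = Δ (u*u*v) + Δ (u*v*u) := by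
      rw [show u*(u*v+v*u) = u*u*v + u*v*u from by noncomm_ring]; exact add _ _
    have hB : Δ ((u*v+v*u)*u) = Δ (u*v*u) + Δ (v*(u*u)) := by
      rw [show (u*v+v*u)*u = u*v*u + v*(u*u) from by noncomm_ring]; exact add _ _
    have hC : Δ (u*v+v*u) = Δ u * v + u * Δ v + Δ v * u + v * Δ u := (add _ _).trans (hJ u v)
    have h2 := hJ u (u*v+v*u)
    rw [hA, hB, hC] at h2
    have h3 := hJ (u*u) v
    rw [hsq u] at h3
    have h4 : Δ (u*v*u) + Δ (u*v*u)
        = (Δ u * v * u + u * Δ v * u + u * v * Δ u)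
          + (Δ u * v * u + u * Δ v * u + u * v * Δ u) :=
      TLcancel1 (congrArg₂ (· - ·) h2 h3) (by noncomm_ring)
    exact TLhalf h4
  have hxzy : ∀ x z y : H →L[ℂ] H,
      Δ (x*z*y) + Δ (y*z*x)
        = Δ x * z * y + x * Δ z * y + x * z * Δ y
          + Δ y * z * x + y * Δ z * x + y * z * Δ x := by
    intro x z y
    have h := hxyx (x+y) z
    rw [show (x+y)*z*(x+y) = x*z*x + (x*z*y + (y*z*x + y*z*y)) from by noncomm_ring] at h
    simp only [add] at h
    exact TLcancel1 (congrArg₂ (· - ·) (congrArg₂ (· - ·) h (hxyx x z)) (hxyx y z))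
      (by noncomm_ring)
  have K : ∀ x y z : H →L[ℂ] H,
      (Δ (x*y) - Δ x * y - x * Δ y) * z * (x*y - y*x)
        + (x*y - y*x) * z * (Δ (x*y) - Δ x * y - x * Δ y) = 0 := by
    intro x y z
    have e1 := hxyx x (y*z*y)
    rw [hxyx y z] at e1
    have e2 := hxyx y (x*z*x)
    rw [hxyx x z] at e2
    have e3 := hxzy (x*y) z (y*x)
    have hQ : Δ (y*x) = Δ x * y + x * Δ y + Δ y * x + y * Δ x - Δ (x*y) :=
      eq_sub_of_add_eq' (hJ x y)
    rw [hQ] at e3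
    have b1 : Δ ((x*y)*z*(y*x)) = Δ (x*(y*z*y)*x) := congrArg Δ (by noncomm_ring)
    have b2 : Δ ((y*x)*z*(x*y)) = Δ (y*(x*z*x)*y) := congrArg Δ (by noncomm_ring)
    rw [b1, b2] at e3
    exact TLcancel1 (congrArg₂ (· - ·) e3 (congrArg₂ (· + ·) e1 e2)) (by noncomm_ring)
  have exv : ∀ b : H →L[ℂ] H, b ≠ 0 → ∃ v, b v ≠ 0 := by
    intro b hb
    by_contra h
    push_neg at h
    exact hb (by ext v; simp [h v])
  have pl : ∀ a b : H →L[ℂ] H, (∀ z : H →L[ℂ] H, a * z * b + b * z * a = 0) →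
      a = 0 ∨ b = 0 := by
    intro a b h
    by_cases hb : b = 0
    · exact Or.inr hb
    refine Or.inl ?_
    obtain ⟨v0, hv0⟩ := exv b hb
    have S : ∀ ζ ω v : H, ⟪ω, b v⟫ • a ζ + ⟪ω, a v⟫ • b ζ = 0 := by
      intro ζ ω v
      have := congrFun (congrArg DFunLike.coe (h (TLrk ζ ω))) v
      simpa [ContinuousLinearMap.mul_apply, ContinuousLinearMap.add_apply,
        TLrk_apply, map_smul] using this
    have hbb : ⟪b v0, b v0⟫ ≠ 0 := by simpa [inner_self_eq_zero] using hv0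
    set c : ℂ := -((⟪b v0, b v0⟫)⁻¹ * ⟪b v0, a v0⟫) with hc
    have ha : ∀ ζ, a ζ = c • b ζ := by
      intro ζ
      have h1 : ⟪b v0, b v0⟫ • a ζ = -(⟪b v0, a v0⟫ • b ζ) :=
        eq_neg_of_add_eq_zero_left (S ζ (b v0) v0)
      have h2 := congrArg (fun w => (⟪b v0, b v0⟫)⁻¹ • w) h1
      simpa [smul_smul, inv_mul_cancel₀ hbb, hc, smul_neg, neg_smul, inv_mul_cancel₀, hv0] using h2
    have h3 := S v0 (b v0) v0
    rw [ha v0, inner_smul_right, smul_smul] at h3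
    have h4 : (⟪b v0, b v0⟫ * c + c * ⟪b v0, b v0⟫) • b v0 = 0 := by
      rw [add_smul]; exact h3
    have hc0 : c = 0 := by
      rcases smul_eq_zero.mp h4 with h5 | h5
      · rcases mul_eq_zero.mp (show (2 * ⟪b v0, b v0⟫) * c = 0 by linear_combination h5)
          with h6 | h6
        · exact absurd h6 (mul_ne_zero two_ne_zero hbb)
        · exact h6
      · exact absurd h5 hv0
    ext ζ
    simp [ha ζ, hc0]
  have central : ∀ x : H →L[ℂ] H, (∀ w : H →L[ℂ] H, x * w = w * x) →
      ∀ y : H →L[ℂ] H, Δ (x*y) = Δ x * y + x * Δ y := by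
    intro x hx y
    by_cases hH : ∀ v : H, v = (0 : H)
    · apply ContinuousLinearMap.ext; intro v; rw [hH v]; simp
    push_neg at hH
    obtain ⟨e, he⟩ := hH
    have hee : ⟪e, e⟫ ≠ 0 := by simpa [inner_self_eq_zero] using he
    have hxv : ∀ ζ : H, x ζ = ((⟪e, e⟫)⁻¹ * ⟪e, x e⟫) • ζ := by
      intro ζ
      have h := congrFun (congrArg DFunLike.coe (hx (TLrk ζ e))) e
      simp only [ContinuousLinearMap.mul_apply, TLrk_apply, map_smul] at h
      have h2 := congrArg (fun w => (⟪e, e⟫)⁻¹ • w) h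
      simpa [smul_smul, inv_mul_cancel₀ hee, inv_mul_cancel₀, he] using h2
    have hx1 : x = ((⟪e, e⟫)⁻¹ * ⟪e, x e⟫) • (1 : H →L[ℂ] H) := by
      ext ζ; simpa using hxv ζ
    rw [hx1, show (((⟪e, e⟫)⁻¹ * ⟪e, x e⟫) • (1 : H →L[ℂ] H)) * y
        = ((⟪e, e⟫)⁻¹ * ⟪e, x e⟫) • y from by rw [smul_mul_assoc, one_mul]]
    rw [hom, hom, hone]
    simp [smul_mul_assoc]
  intro x y
  have D : ∀ v : H →L[ℂ] H,
      (Δ (x*v) - Δ x * v - x * Δ v = 0) ∨ (x*v - v*x = 0) := fun v => pl _ _ (K x v)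
  by_cases hcen : ∀ w : H →L[ℂ] H, x * w = w * x
  · exact central x hcen y
  push_neg at hcen
  obtain ⟨v1, hv1⟩ := hcen
  have hv1' : x * v1 - v1 * x ≠ 0 := sub_ne_zero_of_ne hv1
  have hd1 : Δ (x*v1) - Δ x * v1 - x * Δ v1 = 0 := (D v1).resolve_right hv1'
  rcases D y with h | h
  · rw [sub_sub] at h
    exact sub_eq_zero.mp h
  · rcases D (y + v1) with h2 | h2
    · have hexp : Δ (x*(y+v1)) = Δ (x*y) + Δ (x*v1) := by
        rw [show x*(y+v1) = x*y + x*v1 from by noncomm_ring]; exact add _ _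
      rw [hexp, add y v1] at h2
      exact TLcancel1 (congrArg₂ (· - ·) h2 hd1) (by noncomm_ring)
    · exfalso
      apply hv1'
      have h5 : x*(y+v1) - (y+v1)*x - (x*y - y*x) = x*v1 - v1*x := by noncomm_ring
      rw [← h5, h2, h, sub_zero]
end

section
/- Let X be a compact Hausdorff extremally disconnected topological space, let n be a positive natural number, and let A = C(X, M_n(ℂ)) be the algebra of continuous functions from X to the algebra M_n(ℂ) of n×n complex matrices, with pointwise operations. Every 2-local inner derivation Δ : A → A is a derivation, i.e., Δ is additive, ℂ-homogeneous, and satisfies Δ(x·y) = Δ(x)·y + x·Δ(y) for all x, y ∈ A. -/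
open Matrix

private lemma aux_trace_std_CXMn {n : ℕ} (M : Matrix (Fin n) (Fin n) ℂ) (k l : Fin n) :
    Matrix.trace (M * Matrix.single l k (1:ℂ)) = M k l := by
  rw [Matrix.trace, Finset.sum_eq_single k]
  · simp [Matrix.diag]
  · intro b _ hb
    simp [Matrix.diag, Matrix.mul_single_apply_of_ne (1:ℂ) l k b b hb M]
  · simp

private lemma aux_diag_comm_CXMn {n : ℕ} (b : Matrix (Fin n) (Fin n) ℂ)
    (h : b * Matrix.diagonal (fun i : Fin n => ((i:ℕ):ℂ))
       = Matrix.diagonal (fun i : Fin n => ((i:ℕ):ℂ)) * b)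
    (k l : Fin n) (hkl : k ≠ l) : b k l = 0 := by
  have h1 := congrFun (congrFun h k) l
  rw [Matrix.mul_diagonal, Matrix.diagonal_mul] at h1
  have hne : ((l:ℕ):ℂ) ≠ ((k:ℕ):ℂ) := by
    simpa [Fin.val_eq_val] using (Ne.symm hkl)
  have h2 : b k l * (((l:ℕ):ℂ) - ((k:ℕ):ℂ)) = 0 := by linear_combination h1
  rcases mul_eq_zero.mp h2 with h' | h'
  · exact h'
  · exact absurd (sub_eq_zero.mp h') hne

private lemma aux_shift_comm_CXMn {n : ℕ} (c : Matrix (Fin n) (Fin n) ℂ)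
    (h : c * (Matrix.of fun k l : Fin n => if (k:ℕ)+1 = (l:ℕ) then (1:ℂ) else 0)
       = (Matrix.of fun k l : Fin n => if (k:ℕ)+1 = (l:ℕ) then (1:ℂ) else 0) * c)
    (k l : Fin n) : c k k = c l l := by
  have step : ∀ m : ℕ, ∀ hm : m + 1 < n,
      c ⟨m, Nat.lt_of_succ_lt hm⟩ ⟨m, Nat.lt_of_succ_lt hm⟩ = c ⟨m+1, hm⟩ ⟨m+1, hm⟩ := by
    intro m hm
    have h1 := congrFun (congrFun h ⟨m, Nat.lt_of_succ_lt hm⟩) ⟨m+1, hm⟩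
    rw [Matrix.mul_apply, Matrix.mul_apply] at h1
    have e1 : ∑ x : Fin n, c ⟨m, Nat.lt_of_succ_lt hm⟩ x *
        (Matrix.of fun k l : Fin n => if (k:ℕ)+1 = (l:ℕ) then (1:ℂ) else 0) x ⟨m+1, hm⟩
        = c ⟨m, Nat.lt_of_succ_lt hm⟩ ⟨m, Nat.lt_of_succ_lt hm⟩ := by
      rw [Finset.sum_eq_single (⟨m, Nat.lt_of_succ_lt hm⟩ : Fin n)]
      · simp
      · intro b _ hb
        have : ¬ ((b:ℕ)+1 = m+1) := by
          simp only [Nat.add_right_cancel_iff]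
          intro hh; exact hb (Fin.ext hh)
        simp [this]; intro hh; exact absurd (Fin.ext hh) hb
      · simp
    have e2 : ∑ x : Fin n,
        (Matrix.of fun k l : Fin n => if (k:ℕ)+1 = (l:ℕ) then (1:ℂ) else 0)
          ⟨m, Nat.lt_of_succ_lt hm⟩ x * c x ⟨m+1, hm⟩
        = c ⟨m+1, hm⟩ ⟨m+1, hm⟩ := by
      rw [Finset.sum_eq_single (⟨m+1, hm⟩ : Fin n)]
      · simp
      · intro b _ hb
        have : ¬ (m+1 = (b:ℕ)) := by
          intro hh; exact hb (Fin.ext hh.symm)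
        simp [this]
      · simp
    rw [e1, e2] at h1
    exact h1
  have base : ∀ m : ℕ, ∀ hm : m < n,
      c ⟨m, hm⟩ ⟨m, hm⟩ = c ⟨0, Nat.zero_lt_of_lt hm⟩ ⟨0, Nat.zero_lt_of_lt hm⟩ := by
    intro m
    induction m with
    | zero => intro hm; rfl
    | succ p ih => intro hm; rw [← step p hm, ih (Nat.lt_of_succ_lt hm)]
  calc c k k = c ⟨(k:ℕ), k.isLt⟩ ⟨(k:ℕ), k.isLt⟩ := by simp
    _ = c ⟨0, Nat.zero_lt_of_lt k.isLt⟩ ⟨0, Nat.zero_lt_of_lt k.isLt⟩ := base _ _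
    _ = c ⟨(l:ℕ), l.isLt⟩ ⟨(l:ℕ), l.isLt⟩ := (base _ _).symm
    _ = c l l := by simp

/-- Every 2-local inner derivation on `C(X, Mₙ(ℂ))`, for `X` a compact Hausdorff
extremally disconnected space and `n` a positive natural number, is a derivation. -/
theorem twoLocal_inner_derivation_is_derivation_CX_Mn
    (X : Type*) [TopologicalSpace X] [CompactSpace X] [T2Space X]
    [ExtremallyDisconnected X]
    (n : ℕ) (hn : 0 < n)
    (Δ : C(X, Matrix (Fin n) (Fin n) ℂ) → C(X, Matrix (Fin n) (Fin n) ℂ))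
    (h2loc : ∀ x y : C(X, Matrix (Fin n) (Fin n) ℂ),
      ∃ a : C(X, Matrix (Fin n) (Fin n) ℂ),
        Δ x = a * x - x * a ∧ Δ y = a * y - y * a) :
    (∀ x y, Δ (x + y) = Δ x + Δ y) ∧
    (∀ (c : ℂ) x, Δ (c • x) = c • Δ x) ∧
    (∀ x y, Δ (x * y) = Δ x * y + x * Δ y) := by
  classical
  set U : Matrix (Fin n) (Fin n) ℂ := Matrix.diagonal (fun i : Fin n => ((i:ℕ):ℂ)) with hU
  set V : Matrix (Fin n) (Fin n) ℂ :=
    Matrix.of fun k l : Fin n => if (k:ℕ)+1 = (l:ℕ) then (1:ℂ) else 0 with hV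
  obtain ⟨a, hau, hav⟩ := h2loc (ContinuousMap.const X U) (ContinuousMap.const X V)
  -- the corrected map
  set Δ' : C(X, Matrix (Fin n) (Fin n) ℂ) → C(X, Matrix (Fin n) (Fin n) ℂ) :=
    fun x => Δ x - (a * x - x * a) with hΔ'
  have hΔ'app : ∀ x, Δ' x = Δ x - (a * x - x * a) := fun _ => rfl
  -- Δ' is still 2-local inner
  have h2loc' : ∀ x y : C(X, Matrix (Fin n) (Fin n) ℂ),
      ∃ b : C(X, Matrix (Fin n) (Fin n) ℂ),
        Δ' x = b * x - x * b ∧ Δ' y = b * y - y * b := by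
    intro x y
    obtain ⟨b0, hb1, hb2⟩ := h2loc x y
    refine ⟨b0 - a, ?_, ?_⟩
    · rw [hΔ'app, hb1, sub_mul, mul_sub]; abel
    · rw [hΔ'app, hb2, sub_mul, mul_sub]; abel
  have hΔ'u : Δ' (ContinuousMap.const X U) = 0 := by
    rw [hΔ'app, hau]; simp
  have hΔ'v : Δ' (ContinuousMap.const X V) = 0 := by
    rw [hΔ'app, hav]; simp
  -- trace identity
  have htr : ∀ x y : C(X, Matrix (Fin n) (Fin n) ℂ), ∀ p : X,
      Matrix.trace ((Δ' x) p * y p) = - Matrix.trace (x p * (Δ' y) p) := by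
    intro x y p
    obtain ⟨b, hb1, hb2⟩ := h2loc' x y
    have e1 : (Δ' x) p = b p * x p - x p * b p := by rw [hb1]; simp
    have e2 : (Δ' y) p = b p * y p - y p * b p := by rw [hb2]; simp
    have key : (b p * x p - x p * b p) * y p + x p * (b p * y p - y p * b p)
        = b p * (x p * y p) - (x p * y p) * b p := by noncomm_ring
    have : Matrix.trace ((Δ' x) p * y p + x p * (Δ' y) p) = 0 := by
      rw [e1, e2, key, Matrix.trace_sub, Matrix.trace_mul_comm, sub_self]
    rw [Matrix.trace_add] at this
    linear_combination this
  -- Δ' vanishes on constant std basis matrices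
  have hstd : ∀ i j : Fin n,
      Δ' (ContinuousMap.const X (Matrix.single i j (1:ℂ))) = 0 := by
    intro i j
    set E : Matrix (Fin n) (Fin n) ℂ := Matrix.single i j (1:ℂ) with hE
    obtain ⟨b, hb1, hb2⟩ := h2loc' (ContinuousMap.const X E) (ContinuousMap.const X U)
    obtain ⟨c, hc1, hc2⟩ := h2loc' (ContinuousMap.const X E) (ContinuousMap.const X V)
    ext p k l
    have eb : (Δ' (ContinuousMap.const X E)) p = b p * E - E * b p := by rw [hb1]; simp
    have ec : (Δ' (ContinuousMap.const X E)) p = c p * E - E * c p := by rw [hc1]; simp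
    have hbu : b p * U = U * b p := by
      have h0 : (0 : C(X, Matrix (Fin n) (Fin n) ℂ))
          = b * ContinuousMap.const X U - ContinuousMap.const X U * b := by
        rw [← hΔ'u, hb2]
      have h1 := congrArg (fun f => f p) h0
      simp only [ContinuousMap.zero_apply, ContinuousMap.sub_apply, ContinuousMap.mul_apply,
        ContinuousMap.const_apply] at h1
      exact sub_eq_zero.mp h1.symm
    have hcv : c p * V = V * c p := by
      have h0 : (0 : C(X, Matrix (Fin n) (Fin n) ℂ))
          = c * ContinuousMap.const X V - ContinuousMap.const X V * c := by
        rw [← hΔ'v, hc2]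
      have h1 := congrArg (fun f => f p) h0
      simp only [ContinuousMap.zero_apply, ContinuousMap.sub_apply, ContinuousMap.mul_apply,
        ContinuousMap.const_apply] at h1
      exact sub_eq_zero.mp h1.symm
    by_cases hkl : k = i ∧ l = j
    · obtain ⟨rfl, rfl⟩ := hkl
      rw [ec]
      have : (c p * E - E * c p) k l = c p k k - c p l l := by
        simp [hE, Matrix.sub_apply]
      rw [this, aux_shift_comm_CXMn (c p) hcv k l, sub_self]
      simp
    · rw [eb]
      have hboff : ∀ k' l' : Fin n, k' ≠ l' → b p k' l' = 0 :=
        fun k' l' h' => aux_diag_comm_CXMn (b p) hbu k' l' h'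
      rcases not_and_or.mp hkl with hki | hlj
      · -- k ≠ i
        have h1 : (E * b p) k l = 0 := by
          simp [hE, Matrix.single_mul_apply_of_ne (1:ℂ) i j k l hki (b p)]
        by_cases hlj : l = j
        · subst hlj
          have h2 : (b p * E) k l = b p k i := by
            simp [hE]
          simp [Matrix.sub_apply, h1, h2, hboff k i hki] -- careful
        · have h2 : (b p * E) k l = 0 := by
            simp [hE, Matrix.mul_single_apply_of_ne (1:ℂ) i j k l hlj (b p)]
          simp [Matrix.sub_apply, h1, h2]
      · -- l ≠ j
        have h2 : (b p * E) k l = 0 := by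
          simp [hE, Matrix.mul_single_apply_of_ne (1:ℂ) i j k l hlj (b p)]
        by_cases hki : k = i
        · subst hki
          have h1 : (E * b p) k l = b p j l := by simp [hE]
          have hjl : j ≠ l := fun hh => hlj hh.symm
          simp [Matrix.sub_apply, h1, h2, hboff j l hjl]
        · have h1 : (E * b p) k l = 0 := by
            simp [hE, Matrix.single_mul_apply_of_ne (1:ℂ) i j k l hki (b p)]
          simp [Matrix.sub_apply, h1, h2]
  -- Δ' vanishes identically
  have hzero : ∀ x, Δ' x = 0 := by
    intro x
    ext p k l
    have h1 := htr x (ContinuousMap.const X (Matrix.single l k (1:ℂ))) p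
    rw [hstd l k] at h1
    simp at h1
    have h2 : Matrix.trace ((Δ' x) p * Matrix.single l k (1:ℂ)) = (Δ' x) p k l :=
      aux_trace_std_CXMn _ k l
    rw [h2] at h1 -- need matching
    simpa using h1
  have hinner : ∀ x, Δ x = a * x - x * a := by
    intro x
    have h0 := hzero x
    rw [hΔ'app] at h0
    exact sub_eq_zero.mp h0
  refine ⟨?_, ?_, ?_⟩
  · intro x y; rw [hinner, hinner, hinner, mul_add, add_mul]; abel
  · intro c x; rw [hinner, hinner, mul_smul_comm, smul_mul_assoc, smul_sub]
  · intro x y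
    rw [hinner, hinner, hinner, sub_mul, mul_sub]
    simp only [mul_assoc]
    abel
end

section
/- Let n be a positive natural number and let M_n(ℂ) denote the algebra of n×n complex matrices. Every 2-local inner derivation Δ : M_n(ℂ) → M_n(ℂ) is a derivation, i.e., Δ is additive, ℂ-homogeneous, and satisfies Δ(x·y) = Δ(x)·y + x·Δ(y) for all x, y ∈ M_n(ℂ). -/
open Matrix

namespace TwoLocalAux

variable {n : ℕ}

private abbrev M (n : ℕ) := Matrix (Fin n) (Fin n) ℂ

private lemma entry_unit_mul (i j : Fin n) (m : M n) (p q : Fin n) :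
    (Matrix.single i j (1:ℂ) * m) p q = if p = i then m j q else 0 := by
  simp [Matrix.mul_apply, Matrix.single, ite_and, Finset.sum_ite_eq,
    Finset.sum_ite_eq', eq_comm]

private lemma entry_mul_unit (i j : Fin n) (m : M n) (p q : Fin n) :
    (m * Matrix.single i j (1:ℂ)) p q = if q = j then m p i else 0 := by
  simp [Matrix.mul_apply, Matrix.single, ite_and, Finset.sum_ite_eq,
    Finset.sum_ite_eq', eq_comm]

private lemma nondegen (m : M n) (h : ∀ z : M n, (m * z).trace = 0) : m = 0 := by
  ext p q
  have := h (Matrix.single q p 1)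
  simpa [Matrix.trace, Matrix.diag, Matrix.mul_apply, Matrix.single, ite_and,
    Finset.sum_ite_eq, Finset.sum_ite_eq'] using this

variable (Δ : M n → M n)
variable (h2loc : ∀ x y : M n, ∃ a : M n, Δ x = a * x - x * a ∧ Δ y = a * y - y * a)

include h2loc

private lemma key (x z : M n) : (Δ x * z).trace = -((x * Δ z).trace) := by
  obtain ⟨a, hx, hz⟩ := h2loc x z
  have h1 : Δ x * z + x * Δ z = a * (x * z) - (x * z) * a := by
    rw [hx, hz]; noncomm_ring
  have h2 : (Δ x * z).trace + (x * Δ z).trace = 0 := by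
    rw [← Matrix.trace_add, h1, Matrix.trace_sub, Matrix.trace_mul_comm, sub_self]
  exact eq_neg_of_add_eq_zero_left h2

private lemma traceΔ (x : M n) : (Δ x).trace = 0 := by
  obtain ⟨a, hx, -⟩ := h2loc x x
  rw [hx, Matrix.trace_sub, Matrix.trace_mul_comm, sub_self]

private lemma hadd (x y : M n) : Δ (x + y) = Δ x + Δ y := by
  have h : ∀ z : M n, ((Δ (x + y) - (Δ x + Δ y)) * z).trace = 0 := by
    intro z
    rw [Matrix.sub_mul, Matrix.trace_sub, Matrix.add_mul, Matrix.trace_add,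
      key Δ h2loc (x + y) z, key Δ h2loc x z, key Δ h2loc y z, Matrix.add_mul,
      Matrix.trace_add]
    ring
  have := nondegen _ h
  rwa [sub_eq_zero] at this

private lemma hsmul (c : ℂ) (x : M n) : Δ (c • x) = c • Δ x := by
  have h : ∀ z : M n, ((Δ (c • x) - c • Δ x) * z).trace = 0 := by
    intro z
    rw [Matrix.sub_mul, Matrix.trace_sub, key Δ h2loc (c • x) z, smul_mul_assoc,
      Matrix.trace_smul, smul_mul_assoc, Matrix.trace_smul, key Δ h2loc x z]
    simp only [smul_eq_mul]; ring
  have := nondegen _ h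
  rwa [sub_eq_zero] at this

private lemma hBx (x y : M n) :
    ∃ m : M n, Δ (x * y) - Δ x * y - x * Δ y = x * m := by
  obtain ⟨a, hx, hxy⟩ := h2loc x (x * y)
  exact ⟨a * y - y * a - Δ y, by rw [hxy, hx]; noncomm_ring⟩

private lemma hBy (x y : M n) :
    ∃ m : M n, Δ (x * y) - Δ x * y - x * Δ y = m * y := by
  obtain ⟨a, hy, hxy⟩ := h2loc y (x * y)
  exact ⟨a * x - x * a - Δ x, by rw [hxy, hy]; noncomm_ring⟩

private lemma traceB (x y : M n) :
    (Δ (x * y) - Δ x * y - x * Δ y).trace = 0 := by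
  rw [Matrix.trace_sub, Matrix.trace_sub, traceΔ Δ h2loc, key Δ h2loc x y]
  ring

private lemma hzero : Δ (0 : M n) = 0 := by
  obtain ⟨b, hb, -⟩ := h2loc (0 : M n) 0
  simpa using hb

/-- Leibniz defect vanishes on matrix-unit pairs with mismatched middle indices. -/
private lemma unit_ne (i j k l : Fin n) (hjk : j ≠ k) :
    Δ (Matrix.single i j (1:ℂ) * Matrix.single k l 1)
      - Δ (Matrix.single i j 1) * Matrix.single k l 1
      - Matrix.single i j 1 * Δ (Matrix.single k l 1) = 0 := by
  set x := Matrix.single i j (1:ℂ) with hxdef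
  set y := Matrix.single k l (1:ℂ) with hydef
  have hxy : x * y = 0 := by simp [hxdef, hydef, hjk]
  obtain ⟨a, hx, hy⟩ := h2loc x y
  have hsum : Δ x * y + x * Δ y = 0 := by
    have h1 : Δ x * y + x * Δ y = a * (x * y) - (x * y) * a := by
      rw [hx, hy]; noncomm_ring
    rw [h1, hxy, mul_zero, zero_mul, sub_zero]
  rw [hxy, hzero Δ h2loc, sub_sub, zero_sub, hsum, neg_zero]

/-- Leibniz defect vanishes on `(E i j, E j i)`. -/
private lemma unit_diag (i j : Fin n) :
    Δ (Matrix.single i j (1:ℂ) * Matrix.single j i 1)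
      - Δ (Matrix.single i j 1) * Matrix.single j i 1
      - Matrix.single i j 1 * Δ (Matrix.single j i 1) = 0 := by
  set u := Matrix.single i j (1:ℂ) with hudef
  set v := Matrix.single j i (1:ℂ) with hvdef
  set C := Δ (u * v) - Δ u * v - u * Δ v with hCdef
  obtain ⟨m, hm⟩ := hBx Δ h2loc u v
  obtain ⟨m', hm'⟩ := hBy Δ h2loc u v
  have hrow : ∀ p q, p ≠ i → C p q = 0 := by
    intro p q hp
    rw [hCdef, hm, hudef, entry_unit_mul, if_neg hp]
  have hcol : ∀ p q, q ≠ i → C p q = 0 := by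
    intro p q hq
    rw [hCdef, hm', hvdef, entry_mul_unit, if_neg hq]
  have htr : C.trace = C i i := by
    rw [Matrix.trace]
    refine Finset.sum_eq_single_of_mem i (Finset.mem_univ i) ?_
    intro t _ ht
    exact hrow t t ht
  have hii : C i i = 0 := by
    rw [← htr, hCdef]
    exact traceB Δ h2loc u v
  show C = 0
  ext p q
  by_cases hp : p = i
  · by_cases hq : q = i
    · rw [hp, hq]; simpa using hii
    · simpa using hcol p q hq
  · simpa using hrow p q hp

/-- Leibniz defect vanishes on `(E i j, E j l)` for `i ≠ l`. -/
private lemma unit_offdiag (i j l : Fin n) (hil : i ≠ l) :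
    Δ (Matrix.single i j (1:ℂ) * Matrix.single j l 1)
      - Δ (Matrix.single i j 1) * Matrix.single j l 1
      - Matrix.single i j 1 * Δ (Matrix.single j l 1) = 0 := by
  set u := Matrix.single i j (1:ℂ) with hudef
  set w := Matrix.single l j (1:ℂ) with hwdef
  set v := Matrix.single j l (1:ℂ) with hvdef
  set C := Δ (u * v) - Δ u * v - u * Δ v with hCdef
  have h0 : Δ (w * v) - Δ w * v - w * Δ v = 0 := unit_diag Δ h2loc l j
  obtain ⟨m, hm⟩ := hBx Δ h2loc (u + w) v
  have hsplit : Δ ((u + w) * v) - Δ (u + w) * v - (u + w) * Δ v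
      = C + (Δ (w * v) - Δ w * v - w * Δ v) := by
    rw [add_mul, hadd Δ h2loc (u * v) (w * v), hadd Δ h2loc u w, add_mul, add_mul, hCdef]
    abel
  have hCm : C = (u + w) * m := by
    rw [← hm, hsplit, h0, add_zero]
  obtain ⟨m₂, hm₂⟩ := hBx Δ h2loc u v
  have hmj : ∀ q, m j q = 0 := by
    intro q
    have h1 : C l q = 0 := by
      rw [hCdef, hm₂, hudef, entry_unit_mul, if_neg (Ne.symm hil)]
    have h2 : C l q = m j q := by
      rw [hCm, Matrix.add_mul, Matrix.add_apply, hudef, hwdef,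
        entry_unit_mul, entry_unit_mul, if_neg (Ne.symm hil), if_pos rfl, zero_add]
    rw [← h2, h1]
  show C = 0
  ext p q
  rw [hCm, Matrix.add_mul, Matrix.add_apply, hudef, hwdef, entry_unit_mul, entry_unit_mul]
  rcases eq_or_ne p i with hp | hp
  · have hpl : p ≠ l := by rw [hp]; exact hil
    rw [if_pos hp, if_neg hpl, hmj q, add_zero, Matrix.zero_apply]
  · rw [if_neg hp]
    rcases eq_or_ne p l with hl | hl
    · rw [if_pos hl, hmj q, zero_add, Matrix.zero_apply]
    · rw [if_neg hl, add_zero, Matrix.zero_apply]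

/-- Leibniz defect vanishes on all matrix-unit pairs. -/
private lemma unit_all (i j k l : Fin n) :
    Δ (Matrix.single i j (1:ℂ) * Matrix.single k l 1)
      - Δ (Matrix.single i j 1) * Matrix.single k l 1
      - Matrix.single i j 1 * Δ (Matrix.single k l 1) = 0 := by
  rcases eq_or_ne j k with rfl | hjk
  · rcases eq_or_ne i l with rfl | hil
    · exact unit_diag Δ h2loc i j
    · exact unit_offdiag Δ h2loc i j l hil
  · exact unit_ne Δ h2loc i j k l hjk

private lemma leibniz (x y : M n) : Δ (x * y) = Δ x * y + x * Δ y := by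
  classical
  let D : M n →ₗ[ℂ] M n :=
    { toFun := Δ
      map_add' := hadd Δ h2loc
      map_smul' := hsmul Δ h2loc }
  have step2 : ∀ (i j : Fin n) (y : M n),
      Δ (Matrix.single i j (1:ℂ) * y) - Δ (Matrix.single i j 1) * y
        - Matrix.single i j 1 * Δ y = 0 := by
    intro i j y
    let g : M n →ₗ[ℂ] M n :=
      D.comp (LinearMap.mulLeft ℂ (Matrix.single i j (1:ℂ)))
        - LinearMap.mulLeft ℂ (Δ (Matrix.single i j 1))
        - (LinearMap.mulLeft ℂ (Matrix.single i j (1:ℂ))).comp D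
    have hg : g = 0 := by
      refine Module.Basis.ext (Matrix.stdBasis ℂ (Fin n) (Fin n)) ?_
      rintro ⟨k, l⟩
      rw [Matrix.stdBasis_eq_single]
      show Δ (Matrix.single i j (1:ℂ) * Matrix.single k l 1)
          - Δ (Matrix.single i j 1) * Matrix.single k l 1
          - Matrix.single i j 1 * Δ (Matrix.single k l 1) = 0
      exact unit_all Δ h2loc i j k l
    have := congrFun (congrArg (fun f : M n →ₗ[ℂ] M n => (f : M n → M n)) hg) y
    simpa [g, D, LinearMap.sub_apply, LinearMap.comp_apply, LinearMap.mulLeft_apply,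
      sub_sub] using this
  let f : M n →ₗ[ℂ] M n :=
    D.comp (LinearMap.mulRight ℂ y)
      - (LinearMap.mulRight ℂ y).comp D
      - LinearMap.mulRight ℂ (Δ y)
  have hf : f = 0 := by
    refine Module.Basis.ext (Matrix.stdBasis ℂ (Fin n) (Fin n)) ?_
    rintro ⟨i, j⟩
    rw [Matrix.stdBasis_eq_single]
    show Δ (Matrix.single i j (1:ℂ) * y) - Δ (Matrix.single i j 1) * y
        - Matrix.single i j 1 * Δ y = 0
    exact step2 i j y
  have hx := congrFun (congrArg (fun f : M n →ₗ[ℂ] M n => (f : M n → M n)) hf) x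
  have hx' : Δ (x * y) - Δ x * y - x * Δ y = 0 := by
    simpa [f, D, LinearMap.sub_apply, LinearMap.comp_apply, LinearMap.mulRight_apply]
      using hx
  rw [sub_sub, sub_eq_zero] at hx'
  exact hx'

end TwoLocalAux

/-- Every 2-local inner derivation on the matrix algebra `Mₙ(ℂ)` is a derivation. -/
theorem twoLocal_inner_derivation_is_derivation_Mn
    (n : ℕ) (hn : 0 < n)
    (Δ : Matrix (Fin n) (Fin n) ℂ → Matrix (Fin n) (Fin n) ℂ)
    (h2loc : ∀ x y : Matrix (Fin n) (Fin n) ℂ, ∃ a : Matrix (Fin n) (Fin n) ℂ,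
      Δ x = a * x - x * a ∧ Δ y = a * y - y * a) :
    (∀ x y, Δ (x + y) = Δ x + Δ y) ∧
    (∀ (c : ℂ) x, Δ (c • x) = c • Δ x) ∧
    (∀ x y, Δ (x * y) = Δ x * y + x * Δ y) :=
  ⟨TwoLocalAux.hadd Δ h2loc, TwoLocalAux.hsmul Δ h2loc, TwoLocalAux.leibniz Δ h2loc⟩
end

section
/- Let n be a positive natural number and let Δ : M_n(ℂ) → M_n(ℂ) be a 2-local inner derivation on the algebra M_n(ℂ) of n×n complex matrices. Then there exists a single matrix a ∈ M_n(ℂ) such that Δ(x) = a·x − x·a for all x ∈ M_n(ℂ); in particular Δ is itself an inner derivation. -/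
open Matrix

section aux

private lemma trace_mul_sbm {n : ℕ} (M : Matrix (Fin n) (Fin n) ℂ) (i j : Fin n) :
    trace (M * Matrix.single j i 1) = M i j := by
  classical
  rw [trace]
  simp only [diag_apply, mul_apply, Matrix.single, of_apply, mul_ite, mul_one, mul_zero]
  simp [ite_and, Finset.sum_ite_eq]

private lemma trace_ext {n : ℕ} {M N : Matrix (Fin n) (Fin n) ℂ}
    (h : ∀ z, trace (M * z) = trace (N * z)) : M = N := by
  ext i j
  have := h (Matrix.single j i 1)
  rwa [trace_mul_sbm, trace_mul_sbm] at this

private lemma diag_comm_sbm {n : ℕ} (e : Matrix (Fin n) (Fin n) ℂ)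
    (he : ∀ p q, p ≠ q → e p q = 0) (i j : Fin n) :
    e * Matrix.single i j 1 - Matrix.single i j 1 * e
      = (e i i - e j j) • Matrix.single i j 1 := by
  classical
  ext p q
  rcases eq_or_ne i p with rfl | hp <;> rcases eq_or_ne j q with rfl | hq
  · simp [mul_apply, Matrix.single, ite_and, Finset.sum_ite_eq, Finset.sum_ite_eq']
  · simp [mul_apply, Matrix.single, ite_and, Finset.sum_ite_eq, Finset.sum_ite_eq', hq,
      he j q hq]
  · simp [mul_apply, Matrix.single, ite_and, Finset.sum_ite_eq, Finset.sum_ite_eq', hp,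
      Ne.symm hp, he p i (Ne.symm hp)]
  · simp [mul_apply, Matrix.single, ite_and, Finset.sum_ite_eq, Finset.sum_ite_eq', hp, hq,
      Ne.symm hp, he p i (Ne.symm hp)]

variable {n : ℕ} {Δ : Matrix (Fin n) (Fin n) ℂ → Matrix (Fin n) (Fin n) ℂ}

private lemma traceId (h2loc : ∀ x y : Matrix (Fin n) (Fin n) ℂ,
      ∃ a : Matrix (Fin n) (Fin n) ℂ, Δ x = a * x - x * a ∧ Δ y = a * y - y * a)
    (x y : Matrix (Fin n) (Fin n) ℂ) :
    trace (Δ x * y) = - trace (x * Δ y) := by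
  obtain ⟨a, hx, hy⟩ := h2loc x y
  rw [hx, hy]
  simp only [sub_mul, mul_sub, trace_sub, ← mul_assoc]
  have h : trace (a * x * y) = trace (x * y * a) := by
    rw [mul_assoc, trace_mul_comm, mul_assoc]
  linear_combination h

private lemma deltaAdd (h2loc : ∀ x y : Matrix (Fin n) (Fin n) ℂ,
      ∃ a : Matrix (Fin n) (Fin n) ℂ, Δ x = a * x - x * a ∧ Δ y = a * y - y * a)
    (x y : Matrix (Fin n) (Fin n) ℂ) : Δ (x + y) = Δ x + Δ y := by
  apply trace_ext
  intro z
  have h1 := traceId h2loc (x + y) z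
  have h2 := traceId h2loc x z
  have h3 := traceId h2loc y z
  rw [add_mul, trace_add] at h1 ⊢
  rw [h1, h2, h3]
  ring

private lemma deltaSmul (h2loc : ∀ x y : Matrix (Fin n) (Fin n) ℂ,
      ∃ a : Matrix (Fin n) (Fin n) ℂ, Δ x = a * x - x * a ∧ Δ y = a * y - y * a)
    (c : ℂ) (x : Matrix (Fin n) (Fin n) ℂ) : Δ (c • x) = c • Δ x := by
  apply trace_ext
  intro z
  have h1 := traceId h2loc (c • x) z
  have h2 := traceId h2loc x z
  rw [smul_mul_assoc, trace_smul] at h1 ⊢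
  rw [h1, h2, smul_eq_mul, smul_eq_mul]
  ring

end aux

/-- Every 2-local inner derivation on `Mₙ(ℂ)` is an inner derivation: a single
implementing matrix can be chosen uniformly for all arguments. -/
theorem twoLocal_inner_derivation_is_inner_Mn
    (n : ℕ) (hn : 0 < n)
    (Δ : Matrix (Fin n) (Fin n) ℂ → Matrix (Fin n) (Fin n) ℂ)
    (h2loc : ∀ x y : Matrix (Fin n) (Fin n) ℂ, ∃ a : Matrix (Fin n) (Fin n) ℂ,
      Δ x = a * x - x * a ∧ Δ y = a * y - y * a) :
    ∃ a : Matrix (Fin n) (Fin n) ℂ, ∀ x, Δ x = a * x - x * a := by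
  classical
  -- a diagonal matrix with pairwise distinct diagonal entries
  set x₀ : Matrix (Fin n) (Fin n) ℂ := diagonal (fun i => ((i : ℕ) : ℂ)) with hx₀def
  obtain ⟨a₀, ha₀, -⟩ := h2loc x₀ x₀
  -- every implementer at `x₀` differs from `a₀` by a diagonal matrix
  have hdiag : ∀ c : Matrix (Fin n) (Fin n) ℂ, Δ x₀ = c * x₀ - x₀ * c →
      ∀ p q, p ≠ q → (c - a₀) p q = 0 := by
    intro c hc p q hpq
    have hEq : c * x₀ - x₀ * c = a₀ * x₀ - x₀ * a₀ := by rw [← hc, ha₀]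
    have h2 := congrFun (congrFun hEq p) q
    simp only [Matrix.sub_apply, hx₀def, mul_diagonal, diagonal_mul] at h2
    have hne : ((q : ℕ) : ℂ) - ((p : ℕ) : ℂ) ≠ 0 := by
      rw [sub_ne_zero]
      simp only [ne_eq, Nat.cast_inj]
      exact fun h => hpq (Fin.val_injective h).symm
    have hz : (c p q - a₀ p q) * (((q : ℕ) : ℂ) - ((p : ℕ) : ℂ)) = 0 := by
      linear_combination h2
    have := mul_eq_zero.mp hz
    simp only [Matrix.sub_apply]
    tauto
  -- the all-ones matrix
  set M₁ : Matrix (Fin n) (Fin n) ℂ := of (fun _ _ => 1) with hM₁def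
  obtain ⟨c₁, hc₁M, hc₁x⟩ := h2loc M₁ x₀
  set d : Matrix (Fin n) (Fin n) ℂ := c₁ - a₀ with hddef
  have hdd : ∀ p q, p ≠ q → d p q = 0 := hdiag c₁ hc₁x
  -- implementers for the matrix units
  choose cc hccE hccx using fun i j : Fin n => h2loc (Matrix.single i j 1) x₀
  set e : Fin n → Fin n → Matrix (Fin n) (Fin n) ℂ := fun i j => cc i j - a₀ with hedef
  have hee : ∀ i j p q, p ≠ q → e i j p q = 0 := fun i j => hdiag (cc i j) (hccx i j)
  set lam : Fin n → Fin n → ℂ := fun i j => e i j i i - e i j j j with hlamdef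
  have key1 : ∀ i j, Δ (Matrix.single i j 1)
      = a₀ * Matrix.single i j 1 - Matrix.single i j 1 * a₀
        + lam i j • Matrix.single i j 1 := by
    intro i j
    have hcsum : cc i j = a₀ + e i j := by rw [hedef]; simp
    rw [hccE i j, hcsum, hlamdef, ← diag_comm_sbm (e i j) (hee i j) i j]
    noncomm_ring
  have keyM : Δ M₁ = a₀ * M₁ - M₁ * a₀ + (d * M₁ - M₁ * d) := by
    have hcsum : c₁ = a₀ + d := by rw [hddef]; simp
    rw [hc₁M, hcsum]
    noncomm_ring
  have hM₁sum : M₁ = ∑ i, ∑ j, Matrix.single i j 1 := by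
    ext p q
    simp [Matrix.sum_apply, Matrix.single, ite_and, Finset.sum_ite_eq, hM₁def]
  have hzero : Δ 0 = 0 := by
    have h := deltaAdd h2loc 0 0
    rw [add_zero] at h
    exact left_eq_add.mp h
  have hsum : Δ M₁ = ∑ i, ∑ j, Δ (Matrix.single i j 1) := by
    let D : Matrix (Fin n) (Fin n) ℂ →ₗ[ℂ] Matrix (Fin n) (Fin n) ℂ :=
      { toFun := Δ, map_add' := deltaAdd h2loc, map_smul' := deltaSmul h2loc }
    have : D M₁ = ∑ i, ∑ j, D (Matrix.single i j 1) := by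
      conv_lhs => rw [hM₁sum]
      rw [map_sum]
      exact Finset.sum_congr rfl fun i _ => map_sum D _ _
    exact this
  have hEq2 : d * M₁ - M₁ * d = ∑ i, ∑ j, lam i j • Matrix.single i j 1 := by
    have h2 : ∑ i, ∑ j, Δ (Matrix.single i j 1)
        = a₀ * M₁ - M₁ * a₀ + ∑ i, ∑ j, lam i j • Matrix.single i j 1 := by
      simp only [key1]
      simp only [Finset.sum_add_distrib, Finset.sum_sub_distrib, ← Finset.mul_sum,
        ← Finset.sum_mul]
      rw [← hM₁sum]
    exact add_left_cancel ((keyM.symm.trans hsum).trans h2)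
  have hlam2 : ∀ i j, lam i j = d i i - d j j := by
    intro i j
    have h := congrFun (congrFun hEq2 i) j
    have hL : (d * M₁ - M₁ * d) i j = d i i - d j j := by
      simp only [Matrix.sub_apply, mul_apply, hM₁def, of_apply, mul_one, one_mul]
      rw [Finset.sum_eq_single i (fun k _ hk => hdd i k (Ne.symm hk)) (by simp),
        Finset.sum_eq_single j (fun k _ hk => hdd k j hk) (by simp)]
    have hR : (∑ k, ∑ l, lam k l • Matrix.single k l (1 : ℂ)) i j = lam i j := by
      simp [Matrix.sum_apply, Matrix.single, ite_and, Finset.sum_ite_eq, Finset.sum_ite_eq']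
    rw [hL, hR] at h
    exact h.symm
  have hEfin : ∀ i j, Δ (Matrix.single i j 1)
      = c₁ * Matrix.single i j 1 - Matrix.single i j 1 * c₁ := by
    intro i j
    have hcsum : c₁ = a₀ + d := by rw [hddef]; simp
    rw [key1 i j, hlam2 i j, ← diag_comm_sbm d hdd i j, hcsum]
    noncomm_ring
  refine ⟨c₁, ?_⟩
  intro x
  induction x using Matrix.induction_on' with
  | h_zero => rw [hzero]; noncomm_ring
  | h_add p q hp hq => rw [deltaAdd h2loc, hp, hq]; noncomm_ring
  | h_std_basis i j r =>
    have hr : Matrix.single i j r = r • Matrix.single i j (1 : ℂ) := by simp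
    rw [hr, deltaSmul h2loc, hEfin i j]
    simp only [smul_sub, mul_smul_comm, smul_mul_assoc]
end

section
/- Let X be a compact Hausdorff extremally disconnected topological space, let n be a positive natural number, and let A = C(X, M_n(ℂ)) be the algebra of continuous functions from X to the n×n complex matrices, with pointwise operations. If Δ : A → A is a 2-local inner derivation, then there exists a single element a ∈ A such that Δ(x) = a·x − x·a for all x ∈ A; in particular Δ is itself an inner derivation. -/
open Matrix

private def dmat (n : ℕ) : Matrix (Fin n) (Fin n) ℂ :=
  Matrix.diagonal (fun i : Fin n => ((i : ℕ) : ℂ))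

private def nmat (n : ℕ) : Matrix (Fin n) (Fin n) ℂ :=
  Matrix.of fun i j : Fin n => if (i : ℕ) + 1 = (j : ℕ) then (1 : ℂ) else 0

private lemma diag_of_comm {n : ℕ} {b : Matrix (Fin n) (Fin n) ℂ}
    (h : b * dmat n = dmat n * b) {i j : Fin n} (hij : i ≠ j) : b i j = 0 := by
  have h1 : (b * dmat n) i j = (dmat n * b) i j := by rw [h]
  rw [dmat, Matrix.mul_diagonal, Matrix.diagonal_mul] at h1
  have hc : (((i : ℕ) : ℂ)) ≠ (((j : ℕ) : ℂ)) :=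
    fun hh => hij (Fin.ext (Nat.cast_inj.mp hh))
  have h2 : b i j * (((j : ℕ) : ℂ) - ((i : ℕ) : ℂ)) = 0 := by linear_combination h1
  rcases mul_eq_zero.mp h2 with h' | h'
  · exact h'
  · exact absurd (by linear_combination -h') hc

private lemma const_diag_of_comm_nmat {n : ℕ} {c : Matrix (Fin n) (Fin n) ℂ}
    (h : c * nmat n = nmat n * c) (i j : Fin n) : c i i = c j j := by
  have step : ∀ (m : ℕ) (hm : m + 1 < n),
      c ⟨m, Nat.lt_of_succ_lt hm⟩ ⟨m, Nat.lt_of_succ_lt hm⟩ = c ⟨m+1, hm⟩ ⟨m+1, hm⟩ := by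
    intro m hm
    have h1 : (c * nmat n) ⟨m, Nat.lt_of_succ_lt hm⟩ ⟨m+1, hm⟩
        = (nmat n * c) ⟨m, Nat.lt_of_succ_lt hm⟩ ⟨m+1, hm⟩ := by rw [h]
    rw [Matrix.mul_apply, Matrix.mul_apply] at h1
    have lhs : ∑ x : Fin n, c ⟨m, Nat.lt_of_succ_lt hm⟩ x * nmat n x ⟨m+1, hm⟩
        = c ⟨m, Nat.lt_of_succ_lt hm⟩ ⟨m, Nat.lt_of_succ_lt hm⟩ := by
      rw [Finset.sum_eq_single (⟨m, Nat.lt_of_succ_lt hm⟩ : Fin n)]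
      · simp [nmat]
      · intro x _ hx
        have hne : ¬ ((x : ℕ) + 1 = m + 1) := fun hc => hx (Fin.ext (Nat.succ_injective hc))
        simp [nmat, hne, show ¬ (x : ℕ) = m from fun h => hx (Fin.ext h)]
      · simp
    have rhs : ∑ x : Fin n, nmat n ⟨m, Nat.lt_of_succ_lt hm⟩ x * c x ⟨m+1, hm⟩
        = c ⟨m+1, hm⟩ ⟨m+1, hm⟩ := by
      rw [Finset.sum_eq_single (⟨m+1, hm⟩ : Fin n)]
      · simp [nmat]
      · intro x _ hx
        have hne : ¬ ((m : ℕ) + 1 = (x : ℕ)) := fun hc => hx (Fin.ext hc.symm)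
        simp [nmat, hne]
      · simp
    rw [lhs, rhs] at h1
    exact h1
  have key : ∀ (m : ℕ) (hm : m < n), c ⟨m, hm⟩ ⟨m, hm⟩
      = c ⟨0, Nat.lt_of_le_of_lt (Nat.zero_le _) hm⟩ ⟨0, Nat.lt_of_le_of_lt (Nat.zero_le _) hm⟩ := by
    intro m
    induction m with
    | zero => intro hm; rfl
    | succ k ih =>
      intro hm
      rw [← step k hm, ih (Nat.lt_of_succ_lt hm)]
  have hn : 0 < n := i.pos
  calc c i i = c ⟨(i : ℕ), i.2⟩ ⟨(i : ℕ), i.2⟩ := by simp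
    _ = c ⟨0, hn⟩ ⟨0, hn⟩ := key _ _
    _ = c ⟨(j : ℕ), j.2⟩ ⟨(j : ℕ), j.2⟩ := (key _ _).symm
    _ = c j j := by simp

private lemma trace_mul_std {n : ℕ} (m : Matrix (Fin n) (Fin n) ℂ) (k l : Fin n) :
    Matrix.trace (m * Matrix.single l k (1 : ℂ)) = m k l := by
  rw [Matrix.trace]
  rw [Finset.sum_eq_single k]
  · simp [Matrix.diag]
  · intro x _ hx
    simp [Matrix.diag, hx]
  · simp

private lemma comm_std_eq_zero {n : ℕ} {b c : Matrix (Fin n) (Fin n) ℂ} (k l : Fin n)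
    (hb : ∀ i j : Fin n, i ≠ j → b i j = 0)
    (hc : ∀ i j : Fin n, c i i = c j j)
    (h : b * Matrix.single k l (1 : ℂ) - Matrix.single k l (1 : ℂ) * b
       = c * Matrix.single k l (1 : ℂ) - Matrix.single k l (1 : ℂ) * c) :
    b * Matrix.single k l (1 : ℂ) - Matrix.single k l (1 : ℂ) * b = 0 := by
  have hkl : b k k = b l l := by
    have h1 : (b * Matrix.single k l (1 : ℂ) - Matrix.single k l (1 : ℂ) * b) k l
        = (c * Matrix.single k l (1 : ℂ) - Matrix.single k l (1 : ℂ) * c) k l := by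
      rw [h]
    simp only [Matrix.sub_apply, Matrix.mul_single_apply_same,
      Matrix.single_mul_apply_same, mul_one, one_mul] at h1
    linear_combination h1 + hc k l
  ext i j
  by_cases hj : j = l
  · subst hj
    by_cases hi : i = k
    · subst hi
      simp [hkl]
    · have hik : i ≠ k := hi
      simp [hik, hb i k hik]
  · have hjl : j ≠ l := hj
    by_cases hi : i = k
    · subst hi
      simp [hjl, hb l j (Ne.symm hjl)]
    · have hik : i ≠ k := hi
      simp [hjl, hik]

/-- Every 2-local inner derivation on `C(X, Mₙ(ℂ))`, for `X` a compact Hausdorff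
extremally disconnected space, is an inner derivation: a single implementing
element can be chosen uniformly for all arguments. -/
theorem twoLocal_inner_derivation_is_inner_CX_Mn
    (X : Type*) [TopologicalSpace X] [CompactSpace X] [T2Space X]
    [ExtremallyDisconnected X]
    (n : ℕ) (hn : 0 < n)
    (Δ : C(X, Matrix (Fin n) (Fin n) ℂ) → C(X, Matrix (Fin n) (Fin n) ℂ))
    (h2loc : ∀ x y : C(X, Matrix (Fin n) (Fin n) ℂ),
      ∃ a : C(X, Matrix (Fin n) (Fin n) ℂ),
        Δ x = a * x - x * a ∧ Δ y = a * y - y * a) :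
    ∃ a : C(X, Matrix (Fin n) (Fin n) ℂ), ∀ x, Δ x = a * x - x * a := by
  classical
  set u : C(X, Matrix (Fin n) (Fin n) ℂ) := ContinuousMap.const X (dmat n) with hu_def
  set v : C(X, Matrix (Fin n) (Fin n) ℂ) := ContinuousMap.const X (nmat n) with hv_def
  obtain ⟨a, hau, hav⟩ := h2loc u v
  refine ⟨a, fun x => ?_⟩
  -- Step A : Δ kills (relative to a) all constant matrix units
  have stepA : ∀ k l : Fin n,
      Δ (ContinuousMap.const X (Matrix.single k l (1 : ℂ))) =
        a * (ContinuousMap.const X (Matrix.single k l (1 : ℂ)))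
          - (ContinuousMap.const X (Matrix.single k l (1 : ℂ))) * a := by
    intro k l
    set E : C(X, Matrix (Fin n) (Fin n) ℂ) :=
      ContinuousMap.const X (Matrix.single k l (1 : ℂ)) with hE_def
    obtain ⟨b, hbE, hbu⟩ := h2loc E u
    obtain ⟨c, hcE, hcv⟩ := h2loc E v
    ext t
    -- pointwise equations
    have hbu_t : b t * dmat n - dmat n * b t = a t * dmat n - dmat n * a t := by
      have h1 := DFunLike.congr_fun hbu t
      have h2 := DFunLike.congr_fun hau t
      simp only [ContinuousMap.sub_apply, ContinuousMap.mul_apply, hu_def,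
        ContinuousMap.const_apply] at h1 h2
      rw [← h1, ← h2]
    have hcv_t : c t * nmat n - nmat n * c t = a t * nmat n - nmat n * a t := by
      have h1 := DFunLike.congr_fun hcv t
      have h2 := DFunLike.congr_fun hav t
      simp only [ContinuousMap.sub_apply, ContinuousMap.mul_apply, hv_def,
        ContinuousMap.const_apply] at h1 h2
      rw [← h1, ← h2]
    have hbcE : b t * Matrix.single k l (1 : ℂ)
          - Matrix.single k l (1 : ℂ) * b t
        = c t * Matrix.single k l (1 : ℂ)
          - Matrix.single k l (1 : ℂ) * c t := by
      have h1 := DFunLike.congr_fun hbE t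
      have h2 := DFunLike.congr_fun hcE t
      simp only [ContinuousMap.sub_apply, ContinuousMap.mul_apply, hE_def,
        ContinuousMap.const_apply] at h1 h2
      rw [← h1, ← h2]
    set B := b t - a t with hB_def
    set C := c t - a t with hC_def
    have hBu : B * dmat n = dmat n * B := by
      have : B * dmat n - dmat n * B
          = (b t * dmat n - dmat n * b t) - (a t * dmat n - dmat n * a t) := by
        rw [hB_def]; noncomm_ring
      rw [hbu_t, sub_self] at this
      exact sub_eq_zero.mp this
    have hCv : C * nmat n = nmat n * C := by
      have : C * nmat n - nmat n * C
          = (c t * nmat n - nmat n * c t) - (a t * nmat n - nmat n * a t) := by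
        rw [hC_def]; noncomm_ring
      rw [hcv_t, sub_self] at this
      exact sub_eq_zero.mp this
    have hBC : B * Matrix.single k l (1 : ℂ) - Matrix.single k l (1 : ℂ) * B
        = C * Matrix.single k l (1 : ℂ) - Matrix.single k l (1 : ℂ) * C := by
      rw [hB_def, hC_def]
      have expand : ∀ z : Matrix (Fin n) (Fin n) ℂ,
          (z - a t) * Matrix.single k l (1 : ℂ)
            - Matrix.single k l (1 : ℂ) * (z - a t)
          = (z * Matrix.single k l (1 : ℂ) - Matrix.single k l (1 : ℂ) * z)
            - (a t * Matrix.single k l (1 : ℂ)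
              - Matrix.single k l (1 : ℂ) * a t) := by
        intro z; noncomm_ring
      rw [expand, expand, hbcE]
    have hzero : B * Matrix.single k l (1 : ℂ)
        - Matrix.single k l (1 : ℂ) * B = 0 :=
      comm_std_eq_zero k l (fun i j hij => diag_of_comm hBu hij)
        (const_diag_of_comm_nmat hCv) hBC
    -- conclude
    have hΔE : (Δ E) t = b t * Matrix.single k l (1 : ℂ)
        - Matrix.single k l (1 : ℂ) * b t := by
      have h1 := DFunLike.congr_fun hbE t
      simpa only [ContinuousMap.sub_apply, ContinuousMap.mul_apply, hE_def,
        ContinuousMap.const_apply] using h1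
    have : b t * Matrix.single k l (1 : ℂ) - Matrix.single k l (1 : ℂ) * b t
        = a t * Matrix.single k l (1 : ℂ) - Matrix.single k l (1 : ℂ) * a t := by
      have expand : (b t - a t) * Matrix.single k l (1 : ℂ)
            - Matrix.single k l (1 : ℂ) * (b t - a t)
          = (b t * Matrix.single k l (1 : ℂ)
              - Matrix.single k l (1 : ℂ) * b t)
            - (a t * Matrix.single k l (1 : ℂ)
              - Matrix.single k l (1 : ℂ) * a t) := by noncomm_ring
      have h0 : (b t - a t) * Matrix.single k l (1 : ℂ)
          - Matrix.single k l (1 : ℂ) * (b t - a t) = 0 := hzero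
      rw [expand] at h0
      exact sub_eq_zero.mp h0
    rw [hΔE, this]
    simp [hE_def, ContinuousMap.sub_apply, ContinuousMap.mul_apply]
  -- Step B : conclude for arbitrary x using the trace pairing
  ext t k l
  set E' : Matrix (Fin n) (Fin n) ℂ := Matrix.single l k (1 : ℂ) with hE'_def
  obtain ⟨w, hwx, hwy⟩ := h2loc x (ContinuousMap.const X E')
  have hwx_t : (Δ x) t = w t * x t - x t * w t := by
    simpa only [ContinuousMap.sub_apply, ContinuousMap.mul_apply] using
      DFunLike.congr_fun hwx t
  have hwy_t : w t * E' - E' * w t = a t * E' - E' * a t := by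
    have h1 := DFunLike.congr_fun hwy t
    have h2 := DFunLike.congr_fun (stepA l k) t
    simp only [ContinuousMap.sub_apply, ContinuousMap.mul_apply,
      ContinuousMap.const_apply, ← hE'_def] at h1 h2
    rw [← h1, ← h2]
  set W := w t - a t with hW_def
  have hWE : W * E' - E' * W = 0 := by
    have expand : W * E' - E' * W
        = (w t * E' - E' * w t) - (a t * E' - E' * a t) := by
      rw [hW_def]; noncomm_ring
    rw [expand, hwy_t, sub_self]
  have hcomm : (Δ x) t - (a t * x t - x t * a t) = W * x t - x t * W := by
    rw [hwx_t, hW_def]; noncomm_ring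
  have htr : ((W * x t - x t * W)) k l = 0 := by
    rw [← trace_mul_std (W * x t - x t * W) k l, ← hE'_def]
    have expand : (W * x t - x t * W) * E'
        = (W * (x t * E') - (x t * E') * W) - x t * (W * E' - E' * W) := by
      noncomm_ring
    rw [expand, hWE, mul_zero, sub_zero, Matrix.trace_sub, Matrix.trace_mul_comm, sub_self]
  have hfinal : (Δ x) t k l - (a t * x t - x t * a t) k l = 0 := by
    have := congrFun (congrFun hcomm k) l
    simp only [Matrix.sub_apply] at this ⊢
    rw [this]
    simpa using htr
  have : (Δ x) t k l = (a t * x t - x t * a t) k l := sub_eq_zero.mp hfinal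
  simpa only [ContinuousMap.sub_apply, ContinuousMap.mul_apply, Matrix.sub_apply] using this
end

section
/- Let A be an associative algebra over ℂ which is semiprime, in the sense that for every a ∈ A, if a·x·a = 0 for all x ∈ A then a = 0. Let Δ : A → A be a 2-local derivation (for every pair x, y ∈ A there exists a ℂ-linear derivation D : A → A with Δ(x) = D(x) and Δ(y) = D(y)). If Δ is additive, then Δ is a derivation, i.e., Δ is ℂ-linear and satisfies Δ(x·y) = Δ(x)·y + x·Δ(y) for all x, y ∈ A. -/
private lemma two_cancel {A : Type*} [AddCommGroup A] [Module ℂ A] {x y : A}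
    (h : x + x = y + y) : x = y := by
  have h2 : (2:ℂ) • x = (2:ℂ) • y := by rw [two_smul, two_smul]; exact h
  calc x = (2:ℂ)⁻¹ • ((2:ℂ) • x) := (inv_smul_smul₀ two_ne_zero x).symm
    _ = (2:ℂ)⁻¹ • ((2:ℂ) • y) := by rw [h2]
    _ = y := inv_smul_smul₀ two_ne_zero y

private theorem bresar_core {A : Type*} [Ring A] [Algebra ℂ A]
    (hsp : ∀ a : A, (∀ x : A, a * x * a = 0) → a = 0)
    (d : A → A)
    (hadd : ∀ x y : A, d (x + y) = d x + d y)
    (hJ : ∀ x : A, d (x * x) = d x * x + x * d x) :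
    ∀ a b : A, d (a * b) = d a * b + a * d b := by
  have h0 : d 0 = 0 := by
    have h := hadd 0 0
    rw [add_zero] at h
    exact (add_left_cancel (a := d 0) (by rw [add_zero, ← h])).symm
  have hsub : ∀ x y : A, d (x - y) = d x - d y := by
    intro x y
    have h := hadd (x - y) y
    rw [sub_add_cancel] at h
    exact eq_sub_of_add_eq h.symm
  -- linearized Jordan
  have hJ' : ∀ a b : A, d (a*b + b*a) = d a * b + a * d b + d b * a + b * d a := by
    intro a b
    have h := hJ (a + b)
    rw [show (a+b)*(a+b) = a*a + (a*b + b*a) + b*b from by noncomm_ring,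
        hadd, hadd, hJ, hJ, hadd a b] at h
    linear_combination (norm := noncomm_ring) h
  -- d(aba)
  have haba : ∀ a b : A, d (a*b*a) = d a * b * a + a * d b * a + a * b * d a := by
    intro a b
    have h := hJ' a (a*b + b*a)
    have e1 : d (a*(a*b+b*a) + (a*b+b*a)*a)
        = d (a*a*b + b*(a*a)) + (d (a*b*a) + d (a*b*a)) := by
      rw [← hadd, ← hadd]; congr 1; noncomm_ring
    rw [e1, hJ' (a*a) b, hJ a, hJ' a b] at h
    apply two_cancel
    linear_combination (norm := noncomm_ring) h
  -- fully linearized triple identity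
  have habc : ∀ a b c : A, d (a*b*c + c*b*a)
      = d a*b*c + a*d b*c + a*b*d c + d c*b*a + c*d b*a + c*b*d a := by
    intro a b c
    have h := haba (a+c) b
    have e2 : d ((a+c)*b*(a+c)) = d (a*b*a) + d (a*b*c + c*b*a) + d (c*b*c) := by
      rw [← hadd, ← hadd]; congr 1; noncomm_ring
    rw [e2, haba a b, haba c b, hadd a c] at h
    linear_combination (norm := noncomm_ring) h
  -- semiprime: swap lemma
  have hswap : ∀ p q : A, (∀ x : A, p*x*q = 0) → ∀ x : A, q*x*p = 0 := by
    intro p q h x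
    apply hsp
    intro y
    linear_combination (norm := noncomm_ring) (q*x) * h y * (x*p)
  -- semiprime: anticommuting products vanish
  have hanti : ∀ p q : A, (∀ x : A, p*x*q + q*x*p = 0) → ∀ x : A, p*x*q = 0 := by
    intro p q h x
    have h1 : ∀ t s : A, q*t*(p*s*q) = 0 := by
      intro t s
      have h1' : q*t*(p*s*q) + q*t*(p*s*q) = 0 := by
        linear_combination (norm := noncomm_ring) q*t*(h s) + (h t)*(s*q) - h (t*q*s)
      have := two_cancel (x := q*t*(p*s*q)) (y := 0) (by rw [add_zero]; exact h1')
      exact this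
    apply hsp
    intro y
    linear_combination (norm := noncomm_ring) (p*x) * (h1 y x)
  -- d(b*a) in terms of d(a*b)
  have hba : ∀ a b : A, d (b*a) = d a * b + a * d b + d b * a + b * d a - d (a*b) := by
    intro a b
    have h := hJ' a b
    rw [hadd (a*b) (b*a)] at h
    linear_combination (norm := noncomm_ring) h
  -- Key anticommuting identity: B(a,b) x [a,b] + [a,b] x B(a,b) = 0
  have hBL : ∀ a b x : A,
      (d (a*b) - d a * b - a * d b) * x * (a*b - b*a)
      + (a*b - b*a) * x * (d (a*b) - d a * b - a * d b) = 0 := by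
    intro a b x
    have e1 := haba a (b*x*b)
    rw [haba b x] at e1
    have e2 := haba b (a*x*a)
    rw [haba a x] at e2
    have e3 := habc (a*b) x (b*a)
    rw [hba a b] at e3
    have e4 : d ((a*b)*x*(b*a) + (b*a)*x*(a*b))
        = d (a*(b*x*b)*a) + d (b*(a*x*a)*b) := by
      rw [← hadd]; congr 1; noncomm_ring
    linear_combination (norm := noncomm_ring) e3 - e4 - e1 - e2
  -- hence B(a,b) x [a,b] = 0
  have key1 : ∀ a b x : A,
      (d (a*b) - d a * b - a * d b) * x * (a*b - b*a) = 0 := by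
    intro a b
    exact hanti _ _ (hBL a b)
  -- linearize in b
  have key2 : ∀ a b b' x : A,
      (d (a*b) - d a * b - a * d b) * x * (a*b' - b'*a)
      + (d (a*b') - d a * b' - a * d b') * x * (a*b - b*a) = 0 := by
    intro a b b' x
    have h := key1 a (b + b') x
    rw [show a*(b+b') = a*b + a*b' from by noncomm_ring, hadd (a*b) (a*b'),
        hadd b b'] at h
    linear_combination (norm := noncomm_ring) h - key1 a b x - key1 a b' x
  -- orthogonality: B(a,b) x [a,b'] = 0
  have keyOrth : ∀ a b b' x : A,
      (d (a*b) - d a * b - a * d b) * x * (a*b' - b'*a) = 0 := by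
    intro a b b' x
    apply hsp
    intro y
    linear_combination (norm := noncomm_ring)
      key2 a b b' (x*(a*b' - b'*a)*y*(d (a*b) - d a * b - a * d b)*x)
      - key1 a b' x * (y * ((d (a*b) - d a * b - a * d b) * x * (a*b - b*a)))
  -- linearize in a
  have key2A : ∀ a a' b b' x : A,
      (d (a*b) - d a * b - a * d b) * x * (a'*b' - b'*a')
      + (d (a'*b) - d a' * b - a' * d b) * x * (a*b' - b'*a) = 0 := by
    intro a a' b b' x
    have h := keyOrth (a + a') b b' x
    rw [show (a+a')*b = a*b + a'*b from by noncomm_ring, hadd (a*b) (a'*b),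
        hadd a a'] at h
    linear_combination (norm := noncomm_ring) h - keyOrth a b b' x - keyOrth a' b b' x
  -- full orthogonality: B(a,b) x [u,v] = 0 for all u v
  have keyAll : ∀ a b u v x : A,
      (d (a*b) - d a * b - a * d b) * x * (u*v - v*u) = 0 := by
    intro a b u v x
    apply hsp
    intro y
    linear_combination (norm := noncomm_ring)
      key2A a u b v (x*(u*v - v*u)*y*(d (a*b) - d a * b - a * d b)*x)
      - keyOrth u b v x * (y * ((d (a*b) - d a * b - a * d b) * x * (a*v - v*a)))
  intro a b
  obtain ⟨c, hc⟩ : ∃ c : A, c = d (a*b) - d a * b - a * d b := ⟨_, rfl⟩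
  have hct : ∀ u v t : A, c * t * (u*v - v*u) = 0 := by
    intro u v t; rw [hc]; exact keyAll a b u v t
  -- c is central
  have hcomm : ∀ y : A, c * y = y * c := by
    intro y
    have h1 : ∀ x : A, c * x * (c*y - y*c) = 0 := fun x => hct c y x
    have h3 : c*y - y*c = 0 := by
      apply hsp
      intro x
      linear_combination (norm := noncomm_ring) h1 (y*x) - y * h1 x
    exact sub_eq_zero.mp h3
  -- c annihilates all commutators
  have hcL : ∀ u v : A, c * (u*v - v*u) = 0 := by
    intro u v
    apply hsp
    intro x
    linear_combination (norm := noncomm_ring)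
      hct u v (c*(u*v - v*u)*x) - c * hcomm ((u*v - v*u)*x) * (u*v - v*u)
  -- 2c = d([a,b]) - [da,b] - [a,db]
  have h2c : c + c = d (a*b - b*a) - (d a * b - b * d a) - (a * d b - d b * a) := by
    have h1 := hJ' a b
    rw [hadd (a*b) (b*a)] at h1
    have h2 := hsub (a*b) (b*a)
    rw [hc]
    linear_combination (norm := noncomm_ring) h1 - h2
  -- c * d([a,b]) = 2 c^2
  have hdK : c * d (a*b - b*a) = c*c + c*c := by
    linear_combination (norm := noncomm_ring) hcL (d a) b + hcL a (d b) - c * h2c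
  -- Jordan relation applied to (c, [a,b]) which anti-commute (product 0)
  have hz : c*(a*b - b*a) + (a*b - b*a)*c = 0 := by
    have h1 := hcL a b
    have h2 := hcomm (a*b - b*a)
    linear_combination (norm := noncomm_ring) h1 + h1 + h2.symm
  have hEq := hJ' c (a*b - b*a)
  rw [hz, h0] at hEq
  -- 4 c^3 = 0
  have hc3 : c*c*c + c*c*c + (c*c*c + c*c*c) = 0 := by
    linear_combination (norm := noncomm_ring)
      (-(c * hEq)) - c * hdK - hdK * c - (hcomm (d c)) * (a*b - b*a)
      - (d c) * (hcL a b) - (hcL a b) * (d c)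
  have hc3' : c*c*c = 0 := by
    have s1 : (c*c*c) + (c*c*c) = 0 + 0 := by
      rw [add_zero]
      exact two_cancel (x := c*c*c + c*c*c) (y := 0) (by rw [add_zero]; exact hc3)
    exact two_cancel (x := c*c*c) (y := 0) (by rw [add_zero]; rw [add_zero] at s1; exact s1)
  -- c^2 = 0
  have hc2 : c*c = 0 := by
    apply hsp
    intro x
    linear_combination (norm := noncomm_ring)
      -(c*c*(hcomm x)*c) - c*c*c*(hcomm x) + hc3' * (c*x)
  -- c = 0
  have hc0 : c = 0 := by
    apply hsp
    intro x
    linear_combination (norm := noncomm_ring) hc2 * x - c * (hcomm x)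
  linear_combination (norm := noncomm_ring) hc0 - hc

/-- On a semiprime associative ℂ-algebra, every additive 2-local derivation is a
derivation. -/
theorem additive_twoLocal_derivation_is_derivation_semiprime
    (A : Type*) [Ring A] [Algebra ℂ A]
    (hsp : ∀ a : A, (∀ x : A, a * x * a = 0) → a = 0)
    (Δ : A → A)
    (h2loc : ∀ x y : A, ∃ D : A →ₗ[ℂ] A,
      (∀ u v : A, D (u * v) = D u * v + u * D v) ∧ Δ x = D x ∧ Δ y = D y)
    (hadd : ∀ x y : A, Δ (x + y) = Δ x + Δ y) :
    (∀ (c : ℂ) (x : A), Δ (c • x) = c • Δ x) ∧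
    (∀ x y : A, Δ (x * y) = Δ x * y + x * Δ y) := by
  constructor
  · intro c x
    obtain ⟨D, hD, h1, h2⟩ := h2loc x (c • x)
    rw [h2, map_smul, ← h1]
  · have hJ : ∀ x : A, Δ (x * x) = Δ x * x + x * Δ x := by
      intro x
      obtain ⟨D, hD, h1, h2⟩ := h2loc x (x * x)
      rw [h2, hD, ← h1]
    exact bresar_core hsp Δ hadd hJ
end

section
/- Let (A_j)_{j ∈ J} be a family of associative rings and let A = Π_{j ∈ J} A_j be their product ring (with componentwise operations). Suppose that for each j ∈ J, every 2-local inner derivation on A_j is a derivation (additive and satisfying the Leibniz rule). Then every 2-local inner derivation Δ : A → A is a derivation: Δ is additive and Δ(x·y) = Δ(x)·y + x·Δ(y) for all x, y ∈ A. -/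
/-- If on each factor of a product of associative rings every 2-local inner
derivation is a derivation, then every 2-local inner derivation on the product
ring is a derivation. -/
theorem twoLocal_inner_derivation_product
    (J : Type*) (A : J → Type*) [∀ j, Ring (A j)]
    (hfactor : ∀ j : J, ∀ Δj : A j → A j,
      (∀ u v : A j, ∃ b : A j, Δj u = b * u - u * b ∧ Δj v = b * v - v * b) →
      (∀ u v : A j, Δj (u + v) = Δj u + Δj v) ∧
      (∀ u v : A j, Δj (u * v) = Δj u * v + u * Δj v))
    (Δ : (∀ j, A j) → (∀ j, A j))
    (h2loc : ∀ x y : ∀ j, A j, ∃ a : ∀ j, A j,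
      Δ x = a * x - x * a ∧ Δ y = a * y - y * a) :
    (∀ x y : ∀ j, A j, Δ (x + y) = Δ x + Δ y) ∧
    (∀ x y : ∀ j, A j, Δ (x * y) = Δ x * y + x * Δ y) := by
  classical
  have key : ∀ (j : J) (x y : ∀ j, A j), x j = y j → Δ x j = Δ y j := by
    intro j x y hxy
    obtain ⟨a, hx, hy⟩ := h2loc x y
    rw [hx, hy]
    simp [hxy]
  set Δj : ∀ j, A j → A j := fun j u => Δ (Function.update 0 j u) j with hΔjdef
  have hΔeq : ∀ (j : J) (x : ∀ j, A j), Δ x j = Δj j (x j) := by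
    intro j x
    exact key j x (Function.update 0 j (x j)) (by simp)
  have h2j : ∀ j, ∀ u v : A j, ∃ b : A j,
      Δj j u = b * u - u * b ∧ Δj j v = b * v - v * b := by
    intro j u v
    obtain ⟨a, hu, hv⟩ := h2loc (Function.update 0 j u) (Function.update 0 j v)
    refine ⟨a j, ?_, ?_⟩
    · have := congrFun hu j
      simpa [hΔjdef] using this
    · have := congrFun hv j
      simpa [hΔjdef] using this
  have hD := fun j => hfactor j (Δj j) (h2j j)
  constructor
  · intro x y
    funext j
    have h1 := hΔeq j (x + y)
    have h2 := hΔeq j x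
    have h3 := hΔeq j y
    simp only [Pi.add_apply] at h1 ⊢
    rw [h1, h2, h3, (hD j).1]
  · intro x y
    funext j
    have h1 := hΔeq j (x * y)
    have h2 := hΔeq j x
    have h3 := hΔeq j y
    simp only [Pi.mul_apply, Pi.add_apply] at h1 ⊢
    rw [h1, h2, h3, (hD j).2]
end

section
/- Let n ≥ 2 and let x = Σ_{k=1}^{n−1} e_{k,k+1} ∈ M_n(ℂ), where e_{ij} denotes the standard matrix unit. Suppose b, c ∈ M_n(ℂ) satisfy b·x − x·b = c·x − x·c. Then the diagonal of b − c is constant: b_{ii} − c_{ii} = b_{jj} − c_{jj} for all indices i, j; equivalently, c_{ii} − c_{jj} = b_{ii} − b_{jj} for all i, j. -/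
/-- If two matrices `b, c ∈ Mₙ(ℂ)` (`n = m + 1 ≥ 2`) implement the same inner
derivation at the connecting element `x = Σ_{k} e_{k,k+1}`, then the diagonal of
`b - c` is constant. -/
theorem diagonal_diff_constant_of_commutator_eq
    (m : ℕ) (hm : 1 ≤ m)
    (x : Matrix (Fin (m + 1)) (Fin (m + 1)) ℂ)
    (hx : x = ∑ k : Fin m, Matrix.single k.castSucc k.succ (1 : ℂ))
    (b c : Matrix (Fin (m + 1)) (Fin (m + 1)) ℂ)
    (h : b * x - x * b = c * x - x * c) :
    ∀ i j : Fin (m + 1), b i i - c i i = b j j - c j j := by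
  set d := b - c with hd_def
  have hd : d * x = x * d := by
    rw [hd_def, sub_mul, mul_sub]
    rw [sub_eq_sub_iff_sub_eq_sub] at h
    exact h
  have key : ∀ k : Fin m, d k.castSucc k.castSucc = d k.succ k.succ := by
    intro k
    have hcongr := congrFun (congrFun hd k.castSucc) k.succ
    rw [hx, Matrix.mul_sum, Matrix.sum_mul] at hcongr
    simp only [Matrix.sum_apply] at hcongr
    rw [Finset.sum_eq_single k (fun l _ hl =>
        Matrix.mul_single_apply_of_ne (c := (1 : ℂ)) l.castSucc l.succ
          k.castSucc k.succ (fun hh => hl (Fin.succ_injective m hh.symm)) d),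
      Finset.sum_eq_single k (fun l _ hl =>
        Matrix.single_mul_apply_of_ne (c := (1 : ℂ)) l.castSucc l.succ
          k.castSucc k.succ (fun hh => hl (Fin.castSucc_injective m hh.symm)) d)] at hcongr
    · simpa using hcongr
    · intro hk; exact absurd (Finset.mem_univ k) hk
    · intro hk; exact absurd (Finset.mem_univ k) hk
  have hdiag : ∀ i : Fin (m + 1), d i i = d 0 0 := by
    intro i
    induction i using Fin.induction with
    | zero => rfl
    | succ k ih => rw [← key k]; exact ih
  intro i j
  have : d i i = d j j := (hdiag i).trans (hdiag j).symm
  simpa [hd_def, Matrix.sub_apply] using this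
end

section
/- Let n ≥ 2 and let Δ : M_n(ℂ) → M_n(ℂ) be a 2-local inner derivation. For each ordered pair (i, j) with i ≠ j, fix a matrix a(ij) ∈ M_n(ℂ) such that Δ(e_{ij}) = a(ij)·e_{ij} − e_{ij}·a(ij), and define the matrix A ∈ M_n(ℂ) by A_{ij} = (a(ji))_{ij} for i ≠ j and A_{ii} = 0 for all i. Then for every pair of distinct indices i, j: Δ(e_{ij}) = A·e_{ij} − e_{ij}·A + (a(ij))_{ii}·e_{ij} − e_{ij}·(a(ij))_{jj}. -/
private lemma mul_std_apply {n : ℕ} (a : Matrix (Fin n) (Fin n) ℂ) (i j k l : Fin n) :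
    (a * Matrix.single i j (1:ℂ)) k l = if l = j then a k i else 0 := by
  simp [Matrix.mul_apply, Matrix.single, Matrix.of_apply, ite_and]
  simp [eq_comm]

private lemma std_mul_apply {n : ℕ} (a : Matrix (Fin n) (Fin n) ℂ) (i j k l : Fin n) :
    (Matrix.single i j (1:ℂ) * a) k l = if k = i then a j l else 0 := by
  simp [Matrix.mul_apply, Matrix.single, Matrix.of_apply, ite_and]
  simp [eq_comm]

/-- Lemma 2 of the paper for `Mₙ(ℂ)`: the value of a 2-local inner derivation at a
matrix unit `e_{ij}` (`i ≠ j`) is implemented by the off-diagonal matrix `A`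
gathered from the individual implementing elements, up to a diagonal correction.  -/
theorem twoLocal_inner_derivation_matrix_units
    (n : ℕ) (hn : 2 ≤ n)
    (Δ : Matrix (Fin n) (Fin n) ℂ → Matrix (Fin n) (Fin n) ℂ)
    (h2loc : ∀ x y : Matrix (Fin n) (Fin n) ℂ, ∃ a : Matrix (Fin n) (Fin n) ℂ,
      Δ x = a * x - x * a ∧ Δ y = a * y - y * a)
    (a : Fin n → Fin n → Matrix (Fin n) (Fin n) ℂ)
    (ha : ∀ i j : Fin n, i ≠ j →
      Δ (Matrix.single i j (1 : ℂ)) =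
        a i j * Matrix.single i j (1 : ℂ) -
          Matrix.single i j (1 : ℂ) * a i j)
    (A : Matrix (Fin n) (Fin n) ℂ)
    (hA : ∀ i j : Fin n, A i j = if i = j then 0 else a j i i j) :
    ∀ i j : Fin n, i ≠ j →
      Δ (Matrix.single i j (1 : ℂ)) =
        A * Matrix.single i j (1 : ℂ) -
          Matrix.single i j (1 : ℂ) * A +
        a i j i i • Matrix.single i j (1 : ℂ) -
        a i j j j • Matrix.single i j (1 : ℂ) := by
  intro i j hij
  -- key fact 1: for k ≠ i, the (k,i) entry of `a i j` agrees with that of `a i k`.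
  have key1 : ∀ k : Fin n, k ≠ i → a i j k i = a i k k i := by
    intro k hk
    obtain ⟨b, hb1, hb2⟩ := h2loc (Matrix.single i j (1:ℂ))
      (Matrix.single i k (1:ℂ))
    have e1 : a i j k i = b k i := by
      have := congrFun (congrFun ((ha i j hij).symm.trans hb1) k) j
      simpa [Matrix.sub_apply, mul_std_apply, std_mul_apply, hk, Ne.symm hk,
        (show k ≠ i from hk)] using this
    have e2 : a i k k i = b k i := by
      have := congrFun (congrFun ((ha i k (Ne.symm hk)).symm.trans hb2) k) k
      simpa [Matrix.sub_apply, mul_std_apply, std_mul_apply, hk] using this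
    rw [e1, e2]
  -- key fact 2: for l ≠ j, the (j,l) entry of `a i j` agrees with that of `a l j`.
  have key2 : ∀ l : Fin n, l ≠ j → a i j j l = a l j j l := by
    intro l hl
    obtain ⟨b, hb1, hb2⟩ := h2loc (Matrix.single i j (1:ℂ))
      (Matrix.single l j (1:ℂ))
    have e1 : a i j j l = b j l := by
      have := congrFun (congrFun ((ha i j hij).symm.trans hb1) i) l
      simpa [Matrix.sub_apply, mul_std_apply, std_mul_apply, hl] using this
    have e2 : a l j j l = b j l := by
      have := congrFun (congrFun ((ha l j hl).symm.trans hb2) l) l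
      simpa [Matrix.sub_apply, mul_std_apply, std_mul_apply, hl] using this
    rw [e1, e2]
  have std_apply : ∀ k l : Fin n,
      Matrix.single i j (1:ℂ) k l = if k = i ∧ l = j then 1 else 0 := by
    intro k l
    by_cases h : k = i ∧ l = j
    · obtain ⟨h1, h2⟩ := h; subst h1; subst h2
      simp [Matrix.single_apply_same]
    · rw [Matrix.single_apply_of_ne]
      · simp [h]
      · tauto
  rw [ha i j hij]
  ext k l
  simp only [Matrix.sub_apply, Matrix.add_apply, Matrix.smul_apply,
    mul_std_apply, std_mul_apply, smul_eq_mul, std_apply]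
  by_cases hk : k = i <;> by_cases hl : l = j <;>
    simp [hk, hl, hA, hij, hij.symm]
  · rw [if_neg (fun h => hl h.symm)]
    exact key2 l hl
  · exact key1 k hk
end
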